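/- Let T > 0 and H > 0, and let Z⁰ : ℝ → ℝ be of class C¹ on [0,1] with Z⁰(0) = 1. For n ≥ 0 set λ_n = (n + 1/2)π, f_n(x) = √2·sin(λ_n x), H^ε(x) = cosh(H(1−x)/(2ε))/cosh(H/(2ε)), and α_n(ε) = ∫₀¹ (Z⁰(x) − H^ε(x))·f_n(x) dx. Then there exists ε₀ > 0 such that for all ε with 0 < ε ≤ ε₀: ∑_{n=0}^{∞} λ_n²·α_n(ε)²·exp(−2ε(λ_n² + H²/(4ε²))·T) ≤ (1/ε + 1)·(16 + 2∫₀¹ ((Z⁰)'(x))² dx)·exp(−H²T/(2ε)). -/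

import Mathlib

open intervalIntegral MeasureTheory

lemma summable_exp_neg_nat_sq {b : ℝ} (hb : 0 < b) :
    Summable (fun n : ℕ => Real.exp (-(b * (n : ℝ) ^ 2))) := by
  apply Summable.of_nonneg_of_le (fun n => (Real.exp_pos _).le) (fun n => ?_)
    (summable_geometric_of_lt_one (Real.exp_pos (-b)).le
      (by rw [Real.exp_lt_one_iff]; linarith))
  rw [← Real.exp_nat_mul]
  apply Real.exp_le_exp.2
  have hn : (n : ℝ) ≤ (n : ℝ) ^ 2 := by
    have := Nat.le_self_pow (two_ne_zero) n
    exact_mod_cast this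
  nlinarith

set_option maxHeartbeats 1000000 in
lemma tsum_exp_neg_nat_sq_le {b : ℝ} (hb : 0 < b) :
    (∑' n : ℕ, Real.exp (-(b * (n : ℝ) ^ 2))) ≤ 1 + 2 / Real.sqrt b := by
  have hsb : 0 < Real.sqrt b := Real.sqrt_pos.2 hb
  set N : ℕ := ⌈1 / Real.sqrt b⌉₊ with hNdef
  have hN1 : 1 ≤ N := Nat.one_le_iff_ne_zero.2 (by
    simp only [hNdef, ne_eq, Nat.ceil_eq_zero, not_le]
    positivity)
  have hN1' : (1 : ℝ) ≤ (N : ℝ) := by exact_mod_cast hN1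
  have hNpos : (0 : ℝ) < (N : ℝ) := by linarith
  have hbN : (0 : ℝ) < b * N := by positivity
  have hNge : 1 / Real.sqrt b ≤ (N : ℝ) := Nat.le_ceil _
  have hNle : (N : ℝ) ≤ 1 / Real.sqrt b + 1 := (Nat.ceil_lt_add_one (by positivity)).le
  have hsum := summable_exp_neg_nat_sq hb
  rw [← Summable.sum_add_tsum_nat_add N hsum]
  set r : ℝ := Real.exp (-(b * N)) with hrdef
  have hr0 : 0 ≤ r := (Real.exp_pos _).le
  have hr1 : r < 1 := by rw [hrdef, Real.exp_lt_one_iff]; simp only [neg_neg_iff_pos]; positivity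
  have h1 : ∑ i ∈ Finset.range N, Real.exp (-(b * (i : ℝ) ^ 2)) ≤ (N : ℝ) := by
    calc ∑ i ∈ Finset.range N, Real.exp (-(b * (i : ℝ) ^ 2))
        ≤ ∑ i ∈ Finset.range N, (1 : ℝ) := by
          apply Finset.sum_le_sum
          intro i _
          rw [Real.exp_le_one_iff]
          simp only [neg_nonpos]
          positivity
      _ = (N : ℝ) := by simp
  have h2 : (∑' k : ℕ, Real.exp (-(b * ((k + N : ℕ) : ℝ) ^ 2))) ≤ 1 / (b * N) := by
    have hterm : ∀ k : ℕ, Real.exp (-(b * ((k + N : ℕ) : ℝ) ^ 2)) ≤ r * r ^ k := by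
      intro k
      rw [hrdef, ← Real.exp_nat_mul, ← Real.exp_add]
      apply Real.exp_le_exp.2
      push_cast
      have hk0 : (0 : ℝ) ≤ (k : ℝ) := Nat.cast_nonneg k
      have hpoly : ((k : ℝ) + 1) * N ≤ ((k : ℝ) + N) ^ 2 := by nlinarith
      nlinarith [mul_le_mul_of_nonneg_left hpoly hb.le]
    have hgeom : Summable (fun k : ℕ => r * r ^ k) :=
      (summable_geometric_of_lt_one hr0 hr1).mul_left r
    have hkey : r * (b * N) ≤ 1 - r := by
      have h := Real.add_one_le_exp (b * N)
      have hexp : r * Real.exp (b * N) = 1 := by rw [hrdef, ← Real.exp_add]; simp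
      nlinarith
    calc (∑' k : ℕ, Real.exp (-(b * ((k + N : ℕ) : ℝ) ^ 2)))
        ≤ ∑' k : ℕ, r * r ^ k :=
          Summable.tsum_le_tsum hterm ((summable_nat_add_iff N).2 hsum) hgeom
      _ = r * (1 - r)⁻¹ := by rw [tsum_mul_left, tsum_geometric_of_lt_one hr0 hr1]
      _ = r / (1 - r) := by rw [div_eq_mul_inv]
      _ ≤ 1 / (b * N) := by
          rw [div_le_div_iff₀ (by linarith) hbN]
          linarith
  have h3 : 1 / (b * (N : ℝ)) ≤ 1 / Real.sqrt b := by
    apply one_div_le_one_div_of_le hsb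
    calc Real.sqrt b = b / Real.sqrt b := (Real.div_sqrt).symm
      _ = b * (1 / Real.sqrt b) := by ring
      _ ≤ b * N := by nlinarith
  calc (∑ i ∈ Finset.range N, Real.exp (-(b * (i : ℝ) ^ 2))) +
        (∑' k : ℕ, Real.exp (-(b * ((k + N : ℕ) : ℝ) ^ 2))) ≤ (N : ℝ) + 1 / (b * N) :=
        add_le_add h1 h2
      _ ≤ (1 / Real.sqrt b + 1) + 1 / Real.sqrt b := add_le_add hNle h3
      _ = 1 + 2 / Real.sqrt b := by ring


set_option maxHeartbeats 1600000 in
lemma key_bound (H ε : ℝ) (hH : 0 < H) (hε : 0 < ε)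
    (Z0 Z0' : ℝ → ℝ)
    (hderiv : ∀ x ∈ Set.Icc (0 : ℝ) 1, HasDerivAt Z0 (Z0' x) x)
    (hcont : ContinuousOn Z0' (Set.Icc (0 : ℝ) 1))
    (h0 : Z0 0 = 1) (n : ℕ) :
    (((n : ℝ) + 1 / 2) * Real.pi) ^ 2 *
      (∫ x in (0 : ℝ)..1,
          (Z0 x - Real.cosh (H * (1 - x) / (2 * ε)) / Real.cosh (H / (2 * ε))) *
            (Real.sqrt 2 * Real.sin ((((n : ℝ) + 1 / 2) * Real.pi) * x))) ^ 2
      ≤ 2 * (∫ x in (0 : ℝ)..1, (Z0' x) ^ 2) + 5 := by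
  have hπ := Real.pi_pos
  set l : ℝ := ((n : ℝ) + 1 / 2) * Real.pi with hldef
  have hl : 0 < l := by positivity
  have hcosl : Real.cos l = 0 := by
    have h : l = (n : ℝ) * Real.pi + Real.pi / 2 := by rw [hldef]; ring
    rw [h, Real.cos_add_pi_div_two, Real.sin_nat_mul_pi, neg_zero]
  set c : ℝ := Real.cosh (H / (2 * ε)) with hcdef
  have hc1 : 1 ≤ c := Real.one_le_cosh _
  have hcpos : 0 < c := by linarith
  have hcne : c ≠ 0 := ne_of_gt hcpos
  set I : ℝ := ∫ x in (0 : ℝ)..1, (Z0' x) ^ 2 with hIdef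
  have hI : 0 ≤ I := by
    rw [hIdef]
    exact intervalIntegral.integral_nonneg zero_le_one (fun x _ => sq_nonneg _)
  set w : ℝ → ℝ := fun x => H / (2 * ε) * Real.sinh (H * (1 - x) / (2 * ε)) / c with hwdef
  -- derivative facts
  have hinner : ∀ x : ℝ, HasDerivAt (fun y => H * (1 - y) / (2 * ε)) (-(H / (2 * ε))) x := by
    intro x
    have h := (((hasDerivAt_id x).const_sub 1).const_mul H).div_const (2 * ε)
    exact h.congr_deriv (by ring)
  have hcoshD : ∀ x : ℝ, HasDerivAt
      (fun y => Real.cosh (H * (1 - y) / (2 * ε)) / c) (-(w x)) x := by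
    intro x
    have h := ((hinner x).cosh).div_const c
    exact h.congr_deriv (by rw [hwdef]; ring)
  have hG : ∀ x ∈ Set.uIcc (0 : ℝ) 1,
      HasDerivAt (fun y => Z0 y - Real.cosh (H * (1 - y) / (2 * ε)) / c)
        (Z0' x + w x) x := by
    intro x hx
    rw [Set.uIcc_of_le zero_le_one] at hx
    have h := (hderiv x hx).sub (hcoshD x)
    exact h.congr_deriv (by ring)
  have hv : ∀ x ∈ Set.uIcc (0 : ℝ) 1,
      HasDerivAt (fun y => -Real.cos (l * y) / l) (Real.sin (l * x)) x := by
    intro x _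
    have h := ((((hasDerivAt_id x).const_mul l).cos).neg).div_const l
    exact h.congr_deriv (by field_simp; rfl)
  -- integrability
  have hwcont : Continuous w := by
    rw [hwdef]; fun_prop
  have hcoscont : Continuous fun x => Real.cos (l * x) := by fun_prop
  have hZ0'int : IntervalIntegrable Z0' volume 0 1 := by
    apply ContinuousOn.intervalIntegrable
    rwa [Set.uIcc_of_le zero_le_one]
  have hG'int : IntervalIntegrable (fun x => Z0' x + w x) volume 0 1 :=
    hZ0'int.add (hwcont.intervalIntegrable _ _)
  have hsinint : IntervalIntegrable (fun x => Real.sin (l * x)) volume 0 1 := by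
    apply Continuous.intervalIntegrable; fun_prop
  have hZcos_int : IntervalIntegrable (fun x => Z0' x * Real.cos (l * x)) volume 0 1 := by
    apply ContinuousOn.intervalIntegrable
    rw [Set.uIcc_of_le zero_le_one]
    exact hcont.mul hcoscont.continuousOn
  have hwcos_int : IntervalIntegrable (fun x => w x * Real.cos (l * x)) volume 0 1 :=
    ((hwcont.mul hcoscont).intervalIntegrable _ _)
  -- integration by parts
  have ibp := intervalIntegral.integral_mul_deriv_eq_deriv_mul hG hv hG'int hsinint
  set K : ℝ := ∫ x in (0 : ℝ)..1, (Z0' x + w x) * Real.cos (l * x) with hKdef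
  have hG0 : Z0 0 - Real.cosh (H * (1 - 0) / (2 * ε)) / c = 0 := by
    rw [h0]
    have : H * (1 - 0) / (2 * ε) = H / (2 * ε) := by ring
    rw [this, ← hcdef, div_self hcne, sub_self]
  have hKeq : (∫ x in (0 : ℝ)..1, (Z0' x + w x) * (-Real.cos (l * x) / l))
      = -(1 / l) * K := by
    rw [hKdef, ← intervalIntegral.integral_const_mul]
    apply intervalIntegral.integral_congr
    intro x _
    ring
  have hJ : (∫ x in (0 : ℝ)..1,
      (Z0 x - Real.cosh (H * (1 - x) / (2 * ε)) / c) * Real.sin (l * x)) = K / l := by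
    rw [ibp, hG0, hKeq]
    rw [mul_one, hcosl]
    ring
  have hα : (∫ x in (0 : ℝ)..1,
      (Z0 x - Real.cosh (H * (1 - x) / (2 * ε)) / c) *
        (Real.sqrt 2 * Real.sin (l * x))) = Real.sqrt 2 * (K / l) := by
    rw [← hJ, ← intervalIntegral.integral_const_mul]
    apply intervalIntegral.integral_congr
    intro x _
    ring
  rw [hα]
  have hexpand : l ^ 2 * (Real.sqrt 2 * (K / l)) ^ 2 = 2 * K ^ 2 := by
    rw [mul_pow, mul_pow, Real.sq_sqrt (by norm_num : (0:ℝ) ≤ 2)]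
    field_simp
    ring
  rw [hexpand]
  -- split K
  set X : ℝ := ∫ x in (0 : ℝ)..1, Z0' x * Real.cos (l * x) with hXdef
  set Y : ℝ := ∫ x in (0 : ℝ)..1, w x * Real.cos (l * x) with hYdef
  have hKsplit : K = X + Y := by
    rw [hKdef, hXdef, hYdef, ← intervalIntegral.integral_add hZcos_int hwcos_int]
    apply intervalIntegral.integral_congr
    intro x _
    ring
  -- bound Y
  have hwint_eq : (∫ x in (0 : ℝ)..1, w x) = 1 - 1 / c := by
    have hF : ∀ x ∈ Set.uIcc (0 : ℝ) 1,
        HasDerivAt (fun y => -(Real.cosh (H * (1 - y) / (2 * ε)) / c)) (w x) x := by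
      intro x _
      exact ((hcoshD x).neg).congr_deriv (neg_neg _)
    rw [intervalIntegral.integral_eq_sub_of_hasDerivAt hF (hwcont.intervalIntegrable _ _)]
    have h1 : H * (1 - 1) / (2 * ε) = 0 := by ring
    have h2 : H * (1 - 0) / (2 * ε) = H / (2 * ε) := by ring
    rw [h1, h2, Real.cosh_zero, ← hcdef, div_self hcne]
    ring
  have hY : |Y| ≤ 1 := by
    have habs : |Y| ≤ ∫ x in (0 : ℝ)..1, |w x * Real.cos (l * x)| :=
      intervalIntegral.abs_integral_le_integral_abs zero_le_one
    have hmono : (∫ x in (0 : ℝ)..1, |w x * Real.cos (l * x)|) ≤ ∫ x in (0 : ℝ)..1, w x := by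
      apply intervalIntegral.integral_mono_on zero_le_one hwcos_int.abs
        (hwcont.intervalIntegrable _ _)
      intro x hx
      have hw0 : 0 ≤ w x := by
        rw [hwdef]
        have hx2 := hx.2
        have h1x : (0:ℝ) ≤ 1 - x := by linarith only [hx2]
        have hs : 0 ≤ Real.sinh (H * (1 - x) / (2 * ε)) := by
          rw [Real.sinh_nonneg_iff]
          exact div_nonneg (mul_nonneg hH.le h1x) (by positivity)
        exact div_nonneg (mul_nonneg (by positivity) hs) hcpos.le
      rw [abs_mul, abs_of_nonneg hw0]
      calc w x * |Real.cos (l * x)| ≤ w x * 1 :=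
            mul_le_mul_of_nonneg_left (Real.abs_cos_le_one _) hw0
        _ = w x := mul_one _
    have hone : 1 - 1 / c ≤ 1 := by
      have h01 : 0 < 1 / c := by positivity
      linarith only [h01]
    linarith only [habs.trans (hmono.trans_eq hwint_eq), hone]
  -- bound X
  set t : ℝ := Real.sqrt (2 * I + 1) with htdef
  have ht1 : 1 ≤ t := by
    have h := Real.sqrt_le_sqrt (show (1:ℝ) ≤ 2 * I + 1 by linarith)
    rwa [Real.sqrt_one] at h
  have htpos : 0 < t := by linarith
  have ht2 : t ^ 2 = 2 * I + 1 := Real.sq_sqrt (by linarith)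
  have hcos_sq : (∫ x in (0 : ℝ)..1, Real.cos (l * x) ^ 2) = 1 / 2 := by
    rw [intervalIntegral.integral_comp_mul_left (fun u => Real.cos u ^ 2) hl.ne']
    rw [mul_zero, mul_one, integral_cos_sq, hcosl]
    simp
    field_simp
  have hXbound : |X| ≤ t / 2 := by
    have habs : |X| ≤ ∫ x in (0 : ℝ)..1, |Z0' x * Real.cos (l * x)| :=
      intervalIntegral.abs_integral_le_integral_abs zero_le_one
    have hrhs_int : IntervalIntegrable
        (fun x => (Z0' x) ^ 2 / (2 * t) + t * Real.cos (l * x) ^ 2 / 2) volume 0 1 := by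
      apply ContinuousOn.intervalIntegrable
      rw [Set.uIcc_of_le zero_le_one]
      exact ((hcont.pow 2).div_const _).add
        (((hcoscont.pow 2).continuousOn.const_smul t).div_const 2)
    have hmono : (∫ x in (0 : ℝ)..1, |Z0' x * Real.cos (l * x)|)
        ≤ ∫ x in (0 : ℝ)..1, ((Z0' x) ^ 2 / (2 * t) + t * Real.cos (l * x) ^ 2 / 2) := by
      apply intervalIntegral.integral_mono_on zero_le_one hZcos_int.abs hrhs_int
      intro x _
      rw [abs_mul]
      have h := div_nonneg (sq_nonneg (|Z0' x| - t * |Real.cos (l * x)|))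
        (by positivity : (0:ℝ) ≤ 2 * t)
      have heq : (|Z0' x| - t * |Real.cos (l * x)|) ^ 2 / (2 * t)
          = (Z0' x) ^ 2 / (2 * t) + t * Real.cos (l * x) ^ 2 / 2
            - |Z0' x| * |Real.cos (l * x)| := by
        have e : (|Z0' x| - t * |Real.cos (l * x)|) ^ 2
            = (Z0' x) ^ 2 - 2 * t * (|Z0' x| * |Real.cos (l * x)|)
              + t ^ 2 * Real.cos (l * x) ^ 2 := by
          rw [sub_sq, mul_pow, sq_abs, sq_abs]
          ring
        rw [e]
        field_simp
        ring
      rw [heq] at h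
      linarith only [h]
    have hval : (∫ x in (0 : ℝ)..1, ((Z0' x) ^ 2 / (2 * t) + t * Real.cos (l * x) ^ 2 / 2))
        = I / (2 * t) + t / 4 := by
      have hZ0sq_int : IntervalIntegrable (fun x => (Z0' x) ^ 2) volume 0 1 := by
        apply ContinuousOn.intervalIntegrable
        rw [Set.uIcc_of_le zero_le_one]
        exact hcont.pow 2
      rw [intervalIntegral.integral_add (f := fun x => (Z0' x) ^ 2 / (2 * t))
        (g := fun x => t * Real.cos (l * x) ^ 2 / 2) (hZ0sq_int.div_const _)
        (((hcoscont.pow 2).intervalIntegrable _ _).const_mul t |>.div_const 2)]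
      rw [intervalIntegral.integral_div, intervalIntegral.integral_div,
        intervalIntegral.integral_const_mul, hcos_sq, ← hIdef]
      ring
    have hIt : I / (2 * t) ≤ t / 4 := by
      have hIe : I = (t ^ 2 - 1) / 2 := by rw [ht2]; ring
      rw [hIe]
      have he : (t ^ 2 - 1) / 2 / (2 * t) = t / 4 - 1 / (4 * t) := by
        field_simp
        ring
      rw [he]
      have hpos : 0 < 1 / (4 * t) := by positivity
      linarith only [hpos]
    calc |X| ≤ I / (2 * t) + t / 4 := habs.trans (hmono.trans_eq hval)
      _ ≤ t / 4 + t / 4 := by linarith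
      _ = t / 2 := by ring
  -- conclude
  have hKabs : |K| ≤ |X| + |Y| := hKsplit ▸ abs_add_le X Y
  have hKb : |K| ≤ |X| + 1 := by linarith only [hKabs, hY]
  have h1 : K ^ 2 ≤ (|X| + 1) ^ 2 := by
    rw [← sq_abs K]
    exact pow_le_pow_left₀ (abs_nonneg K) hKb 2
  have h2 : (|X| + 1) ^ 2 ≤ 2 * |X| ^ 2 + 2 := by
    have hs := sq_nonneg (|X| - 1)
    have e1 : (|X| + 1) ^ 2 = |X| ^ 2 + 2 * |X| + 1 := by ring
    have e2 : (|X| - 1) ^ 2 = |X| ^ 2 - 2 * |X| + 1 := by ring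
    linarith only [hs, e1, e2]
  have h3 : |X| ^ 2 ≤ (t / 2) ^ 2 := pow_le_pow_left₀ (abs_nonneg X) hXbound 2
  have h4 : (t / 2) ^ 2 = (2 * I + 1) / 4 := by rw [div_pow, ht2]; norm_num
  linarith only [h1, h2, h3, h4]

/-- Quantitative exponential convergence of the Cole–Hopf heat dynamics towards the steady
state `H^ε(x) = cosh(H(1−x)/(2ε))/cosh(H/(2ε))`: with `λ_n = (n+1/2)π`, `f_n = √2 sin(λ_n ·)`
and `α_n(ε) = ∫₀¹ (Z⁰ − H^ε) f_n`, for all small enough `ε > 0`,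
`∑_{n≥0} λ_n² α_n(ε)² e^{−2ε(λ_n² + H²/(4ε²))T} ≤ (1/ε + 1)(16 + 2∫₀¹ ((Z⁰)')²) e^{−H²T/(2ε)}`. -/
theorem heat_convergence_series_bound (T H : ℝ) (hT : 0 < T) (hH : 0 < H)
    (Z0 Z0' : ℝ → ℝ)
    (hderiv : ∀ x ∈ Set.Icc (0 : ℝ) 1, HasDerivAt Z0 (Z0' x) x)
    (hcont : ContinuousOn Z0' (Set.Icc (0 : ℝ) 1))
    (h0 : Z0 0 = 1) :
    ∃ ε₀ > 0, ∀ ε : ℝ, 0 < ε → ε ≤ ε₀ →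
      (∑' n : ℕ,
          (((n : ℝ) + 1 / 2) * Real.pi) ^ 2 *
            (∫ x in (0 : ℝ)..1,
                (Z0 x - Real.cosh (H * (1 - x) / (2 * ε)) / Real.cosh (H / (2 * ε))) *
                  (Real.sqrt 2 * Real.sin ((((n : ℝ) + 1 / 2) * Real.pi) * x))) ^ 2 *
            Real.exp (-2 * ε * ((((n : ℝ) + 1 / 2) * Real.pi) ^ 2 + H ^ 2 / (4 * ε ^ 2)) * T))
        ≤ (1 / ε + 1) * (16 + 2 * ∫ x in (0 : ℝ)..1, (Z0' x) ^ 2) *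
            Real.exp (-(H ^ 2 * T) / (2 * ε)) := by
  refine ⟨9 * T / 2, by positivity, fun ε hε hεle => ?_⟩
  set I : ℝ := ∫ x in (0 : ℝ)..1, (Z0' x) ^ 2 with hIdef
  have hI : 0 ≤ I :=
    intervalIntegral.integral_nonneg zero_le_one (fun x _ => sq_nonneg _)
  set E : ℝ := Real.exp (-(H ^ 2 * T) / (2 * ε)) with hEdef
  have hE : 0 ≤ E := (Real.exp_pos _).le
  set b : ℝ := 18 * ε * T with hbdef
  have hb : 0 < b := by positivity
  -- per-term bound
  have hbound : ∀ n : ℕ,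
      (((n : ℝ) + 1 / 2) * Real.pi) ^ 2 *
        (∫ x in (0 : ℝ)..1,
            (Z0 x - Real.cosh (H * (1 - x) / (2 * ε)) / Real.cosh (H / (2 * ε))) *
              (Real.sqrt 2 * Real.sin ((((n : ℝ) + 1 / 2) * Real.pi) * x))) ^ 2 *
        Real.exp (-2 * ε * ((((n : ℝ) + 1 / 2) * Real.pi) ^ 2 + H ^ 2 / (4 * ε ^ 2)) * T)
      ≤ (2 * I + 5) * Real.exp (-(b * (n : ℝ) ^ 2)) * E := by
    intro n
    have hkey := key_bound H ε hH hε Z0 Z0' hderiv hcont h0 n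
    have hsplit : Real.exp (-2 * ε * ((((n : ℝ) + 1 / 2) * Real.pi) ^ 2 + H ^ 2 / (4 * ε ^ 2)) * T)
        = Real.exp (-(2 * ε * T * (((n : ℝ) + 1 / 2) * Real.pi) ^ 2)) * E := by
      rw [hEdef, ← Real.exp_add]
      congr 1
      field_simp
      ring
    have hexp_le : Real.exp (-(2 * ε * T * (((n : ℝ) + 1 / 2) * Real.pi) ^ 2))
        ≤ Real.exp (-(b * (n : ℝ) ^ 2)) := by
      apply Real.exp_le_exp.2
      rw [neg_le_neg_iff, hbdef]
      have hπ3 : (3 : ℝ) < Real.pi := Real.pi_gt_three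
      have hn0 : (0 : ℝ) ≤ (n : ℝ) := Nat.cast_nonneg n
      have hsq : 9 * (n : ℝ) ^ 2 ≤ (((n : ℝ) + 1 / 2) * Real.pi) ^ 2 := by
        rw [mul_pow]
        have h1 : (n : ℝ) ^ 2 ≤ ((n : ℝ) + 1 / 2) ^ 2 := by nlinarith
        have h2 : (9 : ℝ) ≤ Real.pi ^ 2 := by nlinarith
        calc 9 * (n : ℝ) ^ 2 ≤ Real.pi ^ 2 * (n : ℝ) ^ 2 := by nlinarith
          _ ≤ ((n : ℝ) + 1 / 2) ^ 2 * Real.pi ^ 2 := by nlinarith [Real.pi_pos]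
      calc 18 * ε * T * (n : ℝ) ^ 2 = 2 * ε * T * (9 * (n : ℝ) ^ 2) := by ring
        _ ≤ 2 * ε * T * (((n : ℝ) + 1 / 2) * Real.pi) ^ 2 := by
            apply mul_le_mul_of_nonneg_left hsq (by positivity)
    rw [hsplit, ← mul_assoc]
    apply mul_le_mul_of_nonneg_right _ hE
    apply mul_le_mul hkey hexp_le (Real.exp_pos _).le (by linarith)
  have hnonneg : ∀ n : ℕ,
      0 ≤ (((n : ℝ) + 1 / 2) * Real.pi) ^ 2 *
        (∫ x in (0 : ℝ)..1,
            (Z0 x - Real.cosh (H * (1 - x) / (2 * ε)) / Real.cosh (H / (2 * ε))) *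
              (Real.sqrt 2 * Real.sin ((((n : ℝ) + 1 / 2) * Real.pi) * x))) ^ 2 *
        Real.exp (-2 * ε * ((((n : ℝ) + 1 / 2) * Real.pi) ^ 2 + H ^ 2 / (4 * ε ^ 2)) * T) := by
    intro n
    positivity
  have hsummable_u : Summable (fun n : ℕ => (2 * I + 5) * Real.exp (-(b * (n : ℝ) ^ 2)) * E) :=
    ((summable_exp_neg_nat_sq hb).mul_left (2 * I + 5)).mul_right E
  have hsummable_t : Summable (fun n : ℕ =>
      (((n : ℝ) + 1 / 2) * Real.pi) ^ 2 *
        (∫ x in (0 : ℝ)..1,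
            (Z0 x - Real.cosh (H * (1 - x) / (2 * ε)) / Real.cosh (H / (2 * ε))) *
              (Real.sqrt 2 * Real.sin ((((n : ℝ) + 1 / 2) * Real.pi) * x))) ^ 2 *
        Real.exp (-2 * ε * ((((n : ℝ) + 1 / 2) * Real.pi) ^ 2 + H ^ 2 / (4 * ε ^ 2)) * T)) :=
    Summable.of_nonneg_of_le hnonneg hbound hsummable_u
  have h2b : 2 / Real.sqrt b ≤ 1 / ε := by
    have hsq : 2 * ε ≤ Real.sqrt b := by
      rw [show (2 * ε) = Real.sqrt ((2 * ε) ^ 2) from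
        (Real.sqrt_sq (by positivity)).symm]
      apply Real.sqrt_le_sqrt
      rw [hbdef]
      nlinarith
    calc 2 / Real.sqrt b ≤ 2 / (2 * ε) := by
          apply div_le_div_of_nonneg_left (by norm_num) (by positivity) hsq
      _ = 1 / ε := by field_simp
  calc (∑' n : ℕ,
      (((n : ℝ) + 1 / 2) * Real.pi) ^ 2 *
        (∫ x in (0 : ℝ)..1,
            (Z0 x - Real.cosh (H * (1 - x) / (2 * ε)) / Real.cosh (H / (2 * ε))) *
              (Real.sqrt 2 * Real.sin ((((n : ℝ) + 1 / 2) * Real.pi) * x))) ^ 2 *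
        Real.exp (-2 * ε * ((((n : ℝ) + 1 / 2) * Real.pi) ^ 2 + H ^ 2 / (4 * ε ^ 2)) * T))
      ≤ ∑' n : ℕ, (2 * I + 5) * Real.exp (-(b * (n : ℝ) ^ 2)) * E :=
        Summable.tsum_le_tsum hbound hsummable_t hsummable_u
    _ = (2 * I + 5) * (∑' n : ℕ, Real.exp (-(b * (n : ℝ) ^ 2))) * E := by
        rw [tsum_mul_right, tsum_mul_left]
    _ ≤ (2 * I + 5) * (1 + 2 / Real.sqrt b) * E := by
        apply mul_le_mul_of_nonneg_right _ hE
        apply mul_le_mul_of_nonneg_left (tsum_exp_neg_nat_sq_le hb) (by linarith)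
    _ ≤ (1 / ε + 1) * (16 + 2 * I) * E := by
        apply mul_le_mul_of_nonneg_right _ hE
        have hs0 : 0 ≤ 2 / Real.sqrt b := by positivity
        have hε0 : 0 ≤ 1 / ε := by positivity
        have hm1 : (2 * I + 5) * (2 / Real.sqrt b) ≤ (2 * I + 5) * (1 / ε) :=
          mul_le_mul_of_nonneg_left h2b (by linarith)
        have hm2 : (2 * I + 5) * (1 / ε) ≤ (16 + 2 * I) * (1 / ε) :=
          mul_le_mul_of_nonneg_right (by linarith) hε0
        have e1 : (2 * I + 5) * (1 + 2 / Real.sqrt b)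
            = (2 * I + 5) + (2 * I + 5) * (2 / Real.sqrt b) := by ring
        have e2 : (1 / ε + 1) * (16 + 2 * I)
            = (16 + 2 * I) + (16 + 2 * I) * (1 / ε) := by ring
        linarith only [hm1, hm2, e1, e2, hI]
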